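/- Clock region equivalence is preserved under resets: if c ∼ c' and R : ℝ≥0^O → ℝ≥0^O is a reset map that sets a fixed subset of coordinates to 0 and leaves the others unchanged, then R(c) ∼ R(c'). -/
import Mathlib


open scoped NNReal

/-- Clock region equivalence with maximal constant `C` on clock valuations in `ℝ≥0^O`:
(1) integer parts agree, or both clocks exceed `C`; (2) the ordering of fractional parts
agrees among clocks not exceeding `C`; (3) zero-ness of fractional parts agrees for clocks
not exceeding `C`. -/
def regEquiv (O C : ℕ) (c c' : Fin O → ℝ≥0) : Prop :=
  (∀ o, (⌊(c o : ℝ)⌋ = ⌊(c' o : ℝ)⌋) ∨ ((C : ℝ) < c o ∧ (C : ℝ) < c' o)) ∧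
  (∀ o o', (c o : ℝ) ≤ C → (c o' : ℝ) ≤ C →
    (Int.fract (c o : ℝ) ≤ Int.fract (c o' : ℝ) ↔
      Int.fract (c' o : ℝ) ≤ Int.fract (c' o' : ℝ))) ∧
  (∀ o, (c o : ℝ) ≤ C → (Int.fract (c o : ℝ) = 0 ↔ Int.fract (c' o : ℝ) = 0))

/-- Region equivalence is preserved under resets: resetting a fixed subset `Z` of the clocks
to `0` (leaving the others unchanged) preserves `∼`. -/
theorem regEquiv_reset (O C : ℕ) (c c' : Fin O → ℝ≥0)
    (h : regEquiv O C c c') (Z : Set (Fin O)) [DecidablePred (· ∈ Z)] :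
    regEquiv O C (fun o => if o ∈ Z then 0 else c o) (fun o => if o ∈ Z then 0 else c' o) := by
  obtain ⟨h1, h2, h3⟩ := h
  refine ⟨?_, ?_, ?_⟩
  · intro o
    by_cases ho : o ∈ Z <;> simp [ho]
    exact h1 o
  · intro o o' ho' ho''
    by_cases ho : o ∈ Z <;> by_cases h2o : o' ∈ Z <;>
      simp_all [Int.fract_nonneg]
    constructor <;> intro hle
    · exact le_of_eq ((h3 o ho').mp (le_antisymm hle (Int.fract_nonneg _)))
    · exact le_of_eq ((h3 o ho').mpr (le_antisymm hle (Int.fract_nonneg _)))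
  · intro o ho
    by_cases hoZ : o ∈ Z <;> simp_all
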